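/- There exists a bijection h : [0,1]² → [0,1] such that h(x,y) = C(x,y) for all (x,y) ∈ [0,1) × (0,1); in particular, h agrees with Cantor's interleaving map C almost everywhere on [0,1]² with respect to the Lebesgue measure. -/

import Mathlib

open Set

/-- The `k`-th digit of the proper decimal expansion of `x`
(meaningful for `x ∈ [0,1)` and `k ≥ 1`): `d_k(x) = ⌊10^k x⌋ - 10⌊10^{k-1} x⌋`. -/
noncomputable def digit (k : ℕ) (x : ℝ) : ℤ :=
  ⌊(10 : ℝ) ^ k * x⌋ - 10 * ⌊(10 : ℝ) ^ (k - 1) * x⌋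

/-- Cantor's interleaving map
`C(x,y) = ∑_{k≥1} d_k(x)/10^{2k-1} + ∑_{k≥1} d_k(y)/10^{2k}`. -/
noncomputable def cantorC (x y : ℝ) : ℝ :=
  (∑' k : ℕ, (digit (k + 1) x : ℝ) / 10 ^ (2 * (k + 1) - 1)) +
    ∑' k : ℕ, (digit (k + 1) y : ℝ) / 10 ^ (2 * (k + 1))

namespace CantorAux

/-- Value of a digit sequence. -/
noncomputable def seqVal (g : ℕ → ℤ) : ℝ := ∑' k, (g k : ℝ) / 10 ^ (k + 1)

/-- A proper digit sequence: digits in `[0,9]`, not eventually all `9`. -/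
def Proper (g : ℕ → ℤ) : Prop :=
  (∀ k, 0 ≤ g k ∧ g k ≤ 9) ∧ ∀ N, ∃ k, N ≤ k ∧ g k ≠ 9

lemma summable_nine : Summable (fun k : ℕ => (9 : ℝ) / 10 ^ (k + 1)) := by
  have h : Summable (fun k : ℕ => (9 / 10 : ℝ) * (10⁻¹) ^ k) :=
    (summable_geometric_of_lt_one (by norm_num) (by norm_num)).mul_left _
  refine h.congr fun k => ?_
  rw [pow_succ]
  field_simp
  rw [← mul_pow]; norm_num

lemma tsum_nine : (∑' k : ℕ, (9 : ℝ) / 10 ^ (k + 1)) = 1 := by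
  have h : (∑' k : ℕ, (9 / 10 : ℝ) * (10⁻¹) ^ k) = 1 := by
    rw [tsum_mul_left, tsum_geometric_of_lt_one (by norm_num) (by norm_num)]
    norm_num
  rw [← h]
  refine tsum_congr fun k => ?_
  rw [pow_succ]
  field_simp
  rw [← mul_pow]; norm_num

lemma summable_seq {g : ℕ → ℤ} (hb : ∀ k, 0 ≤ g k ∧ g k ≤ 9) :
    Summable (fun k => (g k : ℝ) / 10 ^ (k + 1)) := by
  refine Summable.of_nonneg_of_le (fun k => ?_) (fun k => ?_) summable_nine
  · exact div_nonneg (by exact_mod_cast (hb k).1) (by positivity)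
  · exact div_le_div_of_nonneg_right (by exact_mod_cast (hb k).2) (by positivity)

lemma tsum_nine_tail (m : ℕ) : (∑' k : ℕ, (9 : ℝ) / 10 ^ (k + m + 1)) = 1 / 10 ^ m := by
  have h : ∀ k : ℕ, (9 : ℝ) / 10 ^ (k + m + 1) = (9 / 10 ^ (k + 1)) * (1 / 10 ^ m) := by
    intro k
    rw [show k + m + 1 = (k + 1) + m by ring, pow_add]
    field_simp
  rw [tsum_congr h, tsum_mul_right, tsum_nine, one_mul]

lemma seqVal_nonneg {g : ℕ → ℤ} (hb : ∀ k, 0 ≤ g k ∧ g k ≤ 9) : 0 ≤ seqVal g :=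
  tsum_nonneg fun k => div_nonneg (by exact_mod_cast (hb k).1) (by positivity)

lemma seqVal_le_one {g : ℕ → ℤ} (hb : ∀ k, 0 ≤ g k ∧ g k ≤ 9) : seqVal g ≤ 1 := by
  rw [seqVal, ← tsum_nine]
  refine Summable.tsum_le_tsum (fun k => ?_) (summable_seq hb) summable_nine
  exact div_le_div_of_nonneg_right (by exact_mod_cast (hb k).2) (by positivity)

lemma digit_succ (k : ℕ) (x : ℝ) :
    digit (k + 1) x = ⌊(10:ℝ) ^ (k+1) * x⌋ - 10 * ⌊(10:ℝ) ^ k * x⌋ := by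
  simp [digit]

lemma digit_bounds (k : ℕ) (x : ℝ) : 0 ≤ digit (k + 1) x ∧ digit (k + 1) x ≤ 9 := by
  rw [digit_succ]
  set t : ℝ := (10:ℝ) ^ k * x with ht
  have h10 : (10:ℝ) ^ (k+1) * x = 10 * t := by rw [ht, pow_succ]; ring
  rw [h10]
  constructor
  · have : ((10 * ⌊t⌋ : ℤ) : ℝ) ≤ 10 * t := by
      push_cast
      nlinarith [Int.floor_le t]
    have := Int.le_floor.mpr this
    omega
  · have : 10 * t < ((10 * ⌊t⌋ + 10 : ℤ) : ℝ) := by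
      push_cast
      nlinarith [Int.lt_floor_add_one t]
    have := Int.floor_lt.mpr this
    omega

lemma partial_sum {x : ℝ} (hx : x ∈ Ico (0:ℝ) 1) (n : ℕ) :
    ∑ k ∈ Finset.range n, (digit (k + 1) x : ℝ) / 10 ^ (k + 1)
      = ⌊(10:ℝ) ^ n * x⌋ / 10 ^ n := by
  induction n with
  | zero =>
    simp [Int.floor_eq_zero_iff.mpr (by simpa using hx)]
  | succ n ih =>
    rw [Finset.sum_range_succ, ih, digit_succ]
    have h1 : ((10:ℝ)) ^ n ≠ 0 := by positivity
    have h2 : ((10:ℝ)) ^ (n+1) ≠ 0 := by positivity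
    push_cast
    rw [pow_succ]
    field_simp
    ring

lemma hasSum_digits {x : ℝ} (hx : x ∈ Ico (0:ℝ) 1) :
    HasSum (fun k => (digit (k + 1) x : ℝ) / 10 ^ (k + 1)) x := by
  rw [hasSum_iff_tendsto_nat_of_nonneg
      (fun k => div_nonneg (by exact_mod_cast (digit_bounds k x).1) (by positivity))]
  simp only [partial_sum hx]
  have hlow : ∀ n : ℕ, x - (10⁻¹ : ℝ) ^ n ≤ ⌊(10:ℝ) ^ n * x⌋ / 10 ^ n := by
    intro n
    have hp : (0:ℝ) < 10 ^ n := by positivity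
    rw [le_div_iff₀ hp]
    have h1 : (10:ℝ)^n * x - 1 < ⌊(10:ℝ)^n * x⌋ := Int.sub_one_lt_floor _
    have hinv : (10⁻¹:ℝ)^n * 10^n = 1 := by rw [← mul_pow]; norm_num
    nlinarith
  have hhigh : ∀ n : ℕ, ⌊(10:ℝ) ^ n * x⌋ / 10 ^ n ≤ x := by
    intro n
    have hp : (0:ℝ) < 10 ^ n := by positivity
    rw [div_le_iff₀ hp]
    have := Int.floor_le ((10:ℝ)^n * x)
    linarith
  have hl : Filter.Tendsto (fun n : ℕ => x - (10⁻¹ : ℝ) ^ n) Filter.atTop (nhds x) := by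
    have := tendsto_pow_atTop_nhds_zero_of_lt_one (by norm_num : (0:ℝ) ≤ 10⁻¹) (by norm_num)
    simpa using Filter.Tendsto.sub (tendsto_const_nhds (x := x)) this
  exact tendsto_of_tendsto_of_tendsto_of_le_of_le hl tendsto_const_nhds hlow hhigh

lemma seqVal_digits {x : ℝ} (hx : x ∈ Ico (0:ℝ) 1) :
    seqVal (fun k => digit (k + 1) x) = x := (hasSum_digits hx).tsum_eq

lemma digits_proper {x : ℝ} (hx : x ∈ Ico (0:ℝ) 1) :
    Proper (fun k => digit (k + 1) x) := by
  refine ⟨fun k => digit_bounds k x, fun N => ?_⟩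
  by_contra hcon
  push_neg at hcon
  have h9 : ∀ k, N ≤ k → digit (k + 1) x = 9 := fun k hk => hcon k hk
  have hsum := summable_seq (g := fun k => digit (k + 1) x) (fun k => digit_bounds k x)
  have hkey := hsum.sum_add_tsum_nat_add N
  rw [(hasSum_digits hx).tsum_eq, partial_sum hx] at hkey
  have htail : (∑' k : ℕ, (digit (k + N + 1) x : ℝ) / 10 ^ (k + N + 1))
      = 1 / 10 ^ N := by
    rw [← tsum_nine_tail N]
    exact tsum_congr fun k => by rw [h9 (k + N) (by omega)]; norm_num
  rw [htail] at hkey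
  have hp : (0:ℝ) < 10 ^ N := by positivity
  have hfl := Int.lt_floor_add_one ((10:ℝ)^N * x)
  have : (⌊(10:ℝ)^N * x⌋ : ℝ) + 1 = 10 ^ N * x := by
    field_simp at hkey
    linarith
  linarith

lemma seqVal_lt {g g' : ℕ → ℤ} (hg : Proper g) (hb' : ∀ k, 0 ≤ g' k ∧ g' k ≤ 9)
    {n : ℕ} (hlt : g n < g' n) (hpre : ∀ k, k < n → g k = g' k) :
    seqVal g < seqVal g' := by
  have hb := hg.1
  have hsg := summable_seq hb
  have hsg' := summable_seq hb'
  rw [seqVal, seqVal, ← hsg.sum_add_tsum_nat_add (n+1), ← hsg'.sum_add_tsum_nat_add (n+1)]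
  have hprefix : ∑ k ∈ Finset.range n, (g k : ℝ) / 10 ^ (k + 1)
      = ∑ k ∈ Finset.range n, (g' k : ℝ) / 10 ^ (k + 1) :=
    Finset.sum_congr rfl fun k hk => by rw [hpre k (Finset.mem_range.mp hk)]
  rw [Finset.sum_range_succ, Finset.sum_range_succ, hprefix]
  have htail' : (0:ℝ) ≤ ∑' k : ℕ, (g' (k + (n+1)) : ℝ) / 10 ^ (k + (n+1) + 1) :=
    tsum_nonneg fun k => div_nonneg (by exact_mod_cast (hb' _).1) (by positivity)
  have htail : (∑' k : ℕ, (g (k + (n+1)) : ℝ) / 10 ^ (k + (n+1) + 1)) < 1 / 10 ^ (n+1) := by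
    obtain ⟨k0, hk0, hne⟩ := hg.2 (n+1)
    rw [← tsum_nine_tail (n+1)]
    refine Summable.tsum_lt_tsum_of_nonneg
      (fun k => div_nonneg (by exact_mod_cast (hb _).1) (by positivity))
      (fun k => div_le_div_of_nonneg_right (by exact_mod_cast (hb _).2) (by positivity))
      (i := k0 - (n+1)) ?_ ((summable_nine.comp_injective
        (i := fun k : ℕ => k + (n+1)) fun a b hab => by simpa using hab).congr
        fun k => rfl)
    have hidx : k0 - (n+1) + (n+1) = k0 := Nat.sub_add_cancel hk0
    rw [hidx]
    have h8 : (g k0 : ℝ) < 9 := by exact_mod_cast lt_of_le_of_ne (hb k0).2 hne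
    exact (div_lt_div_iff_of_pos_right (by positivity)).mpr h8
  have hg'n : ((g n : ℝ) + 1) / 10 ^ (n+1) ≤ (g' n : ℝ) / 10 ^ (n+1) := by
    have : (g n : ℝ) + 1 ≤ g' n := by exact_mod_cast hlt
    exact div_le_div_of_nonneg_right this (by positivity)
  have hsplit : ((g n : ℝ) + 1) / 10 ^ (n+1) = (g n : ℝ) / 10 ^ (n+1) + 1 / 10 ^ (n+1) := by
    ring
  linarith

lemma seqVal_inj {g g' : ℕ → ℤ} (hg : Proper g) (hg' : Proper g')
    (h : seqVal g = seqVal g') : g = g' := by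
  by_contra hne
  have hex : ∃ n, g n ≠ g' n := by
    by_contra hc; push_neg at hc; exact hne (funext hc)
  classical
  let n := Nat.find hex
  have hn : g n ≠ g' n := Nat.find_spec hex
  have hpre : ∀ k, k < n → g k = g' k := fun k hk => by
    have := Nat.find_min hex hk; simpa using this
  rcases lt_or_gt_of_ne hn with hlt | hgt
  · exact absurd h (ne_of_lt (seqVal_lt hg hg'.1 hlt hpre))
  · exact absurd h.symm (ne_of_lt (seqVal_lt hg' hg.1 hgt fun k hk => (hpre k hk).symm))

/-- The interleaved digit sequence of a pair. -/
noncomputable def inter (x y : ℝ) (n : ℕ) : ℤ :=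
  if Even n then digit (n / 2 + 1) x else digit (n / 2 + 1) y

lemma inter_even (x y : ℝ) (k : ℕ) : inter x y (2 * k) = digit (k + 1) x := by
  simp [inter, Nat.mul_div_cancel_left k (by norm_num : 0 < 2)]

lemma inter_odd (x y : ℝ) (k : ℕ) : inter x y (2 * k + 1) = digit (k + 1) y := by
  have : ¬ Even (2 * k + 1) := by simp [Nat.even_add_one, parity_simps]
  simp [inter, this, Nat.add_mul_div_left, Nat.mul_add_div]

lemma inter_bounds (x y : ℝ) (k : ℕ) : 0 ≤ inter x y k ∧ inter x y k ≤ 9 := by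
  unfold inter; split <;> exact digit_bounds _ _

lemma inter_proper {x y : ℝ} (hx : x ∈ Ico (0:ℝ) 1) :
    Proper (inter x y) := by
  refine ⟨inter_bounds x y, fun N => ?_⟩
  obtain ⟨j, hj, hne⟩ := (digits_proper hx).2 N
  exact ⟨2 * j, by omega, by rw [inter_even]; exact hne⟩

lemma cantorC_eq (x y : ℝ) : cantorC x y = seqVal (inter x y) := by
  have hb := inter_bounds x y
  have hsum := summable_seq (g := inter x y) hb
  have h2 : ∀ n : ℕ, 2 * (n + 1) - 1 = 2 * n + 1 := fun n => by omega
  have heven : (∑' k : ℕ, (digit (k + 1) x : ℝ) / 10 ^ (2 * (k + 1) - 1))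
      = ∑' k : ℕ, (inter x y (2 * k) : ℝ) / 10 ^ (2 * k + 1) :=
    tsum_congr fun k => by rw [inter_even, h2]
  have hodd : (∑' k : ℕ, (digit (k + 1) y : ℝ) / 10 ^ (2 * (k + 1)))
      = ∑' k : ℕ, (inter x y (2 * k + 1) : ℝ) / 10 ^ (2 * k + 1 + 1) :=
    tsum_congr fun k => by rw [inter_odd]; ring_nf
  have h1 : Summable (fun k : ℕ => (inter x y (2 * k) : ℝ) / 10 ^ (2 * k + 1)) :=
    (hsum.comp_injective (i := fun k : ℕ => 2 * k) fun a b hab => by simpa using hab).congr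
      fun k => rfl
  have h2' : Summable (fun k : ℕ => (inter x y (2 * k + 1) : ℝ) / 10 ^ (2 * k + 1 + 1)) :=
    (hsum.comp_injective (i := fun k : ℕ => 2 * k + 1) fun a b hab => by simpa using hab).congr
      fun k => rfl
  rw [cantorC, heven, hodd, seqVal]
  exact tsum_even_add_odd (f := fun n => ((inter x y n : ℝ) / 10 ^ (n + 1))) h1 h2'

lemma cantorC_mem (x y : ℝ) : cantorC x y ∈ Icc (0:ℝ) 1 := by
  rw [cantorC_eq]
  exact ⟨seqVal_nonneg (inter_bounds x y), seqVal_le_one (inter_bounds x y)⟩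

lemma cantorC_inj {x y x' y' : ℝ} (hx : x ∈ Ico (0:ℝ) 1) (hy : y ∈ Ico (0:ℝ) 1)
    (hx' : x' ∈ Ico (0:ℝ) 1) (hy' : y' ∈ Ico (0:ℝ) 1)
    (h : cantorC x y = cantorC x' y') : x = x' ∧ y = y' := by
  rw [cantorC_eq, cantorC_eq] at h
  have hi := seqVal_inj (inter_proper hx) (inter_proper hx') h
  constructor
  · have hdig : (fun k => digit (k + 1) x) = fun k => digit (k + 1) x' := by
      funext k
      rw [← inter_even x y k, ← inter_even x' y' k, hi]
    rw [← seqVal_digits hx, hdig, seqVal_digits hx']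
  · have hdig : (fun k => digit (k + 1) y) = fun k => digit (k + 1) y' := by
      funext k
      rw [← inter_odd x y k, ← inter_odd x' y' k, hi]
    rw [← seqVal_digits hy, hdig, seqVal_digits hy']

/-- The digit sequence of `x` interleaved with constant `9`s. -/
noncomputable def oddNine (x : ℝ) (n : ℕ) : ℤ :=
  if Even n then digit (n / 2 + 1) x else 9

lemma oddNine_even (x : ℝ) (k : ℕ) : oddNine x (2 * k) = digit (k + 1) x := by
  simp [oddNine, Nat.mul_div_cancel_left k (by norm_num : 0 < 2)]

lemma oddNine_odd (x : ℝ) (k : ℕ) : oddNine x (2 * k + 1) = 9 := by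
  have : ¬ Even (2 * k + 1) := by simp [Nat.even_add_one, parity_simps]
  simp [oddNine, this]

lemma oddNine_bounds (x : ℝ) (k : ℕ) : 0 ≤ oddNine x k ∧ oddNine x k ≤ 9 := by
  unfold oddNine; split
  · exact digit_bounds _ _
  · omega

lemma oddNine_proper {x : ℝ} (hx : x ∈ Ico (0:ℝ) 1) : Proper (oddNine x) := by
  refine ⟨oddNine_bounds x, fun N => ?_⟩
  obtain ⟨j, hj, hne⟩ := (digits_proper hx).2 N
  exact ⟨2 * j, by omega, by rw [oddNine_even]; exact hne⟩

/-- An injection of `[0,1)` into `[0,1] \ C([0,1)×(0,1))`. -/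
noncomputable def tMap (x : ℝ) : ℝ := seqVal (oddNine x)

lemma tMap_mem (x : ℝ) : tMap x ∈ Icc (0:ℝ) 1 :=
  ⟨seqVal_nonneg (oddNine_bounds x), seqVal_le_one (oddNine_bounds x)⟩

lemma tMap_inj {x x' : ℝ} (hx : x ∈ Ico (0:ℝ) 1) (hx' : x' ∈ Ico (0:ℝ) 1)
    (h : tMap x = tMap x') : x = x' := by
  have hi := seqVal_inj (oddNine_proper hx) (oddNine_proper hx') h
  have hdig : (fun k => digit (k + 1) x) = fun k => digit (k + 1) x' := by
    funext k
    rw [← oddNine_even x k, ← oddNine_even x' k, hi]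
  rw [← seqVal_digits hx, hdig, seqVal_digits hx']

lemma tMap_not_cantorC {x x' y' : ℝ} (hx : x ∈ Ico (0:ℝ) 1) (hx' : x' ∈ Ico (0:ℝ) 1)
    (hy' : y' ∈ Ico (0:ℝ) 1) : tMap x ≠ cantorC x' y' := by
  intro h
  rw [tMap, cantorC_eq] at h
  have hi := seqVal_inj (oddNine_proper hx) (inter_proper hx') h
  obtain ⟨j, hj, hne⟩ := (digits_proper hy').2 0
  have h2 := congrFun hi (2 * j + 1)
  rw [oddNine_odd, inter_odd] at h2
  exact hne h2.symm

end CantorAux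

open CantorAux MeasureTheory Cardinal

/-- There exists a bijection `h : [0,1]² → [0,1]` with `h(x,y) = C(x,y)` for all
`(x,y) ∈ [0,1) × (0,1)`; in particular `h` agrees with Cantor's interleaving map `C`
almost everywhere on `[0,1]²` with respect to the Lebesgue measure. -/
theorem exists_bijection_eq_cantorC_ae :
    ∃ h : ℝ × ℝ → ℝ,
      Set.BijOn h (Icc 0 1 ×ˢ Icc 0 1) (Icc (0 : ℝ) 1) ∧
        (∀ x ∈ Ico (0 : ℝ) 1, ∀ y ∈ Ioo (0 : ℝ) 1, h (x, y) = cantorC x y) ∧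
        MeasureTheory.volume
          {p : ℝ × ℝ | p ∈ Icc (0 : ℝ) 1 ×ˢ Icc (0 : ℝ) 1 ∧ h p ≠ cantorC p.1 p.2} = 0 := by
  classical
  set A : Set (ℝ × ℝ) := Ico 0 1 ×ˢ Ioo 0 1 with hA
  set sq : Set (ℝ × ℝ) := Icc 0 1 ×ˢ Icc 0 1 with hsq
  set B : Set ℝ := (fun p : ℝ × ℝ => cantorC p.1 p.2) '' A with hB
  set S : Set (ℝ × ℝ) := sq \ A with hS
  set T : Set ℝ := Icc 0 1 \ B with hT
  have hAsq : A ⊆ sq := prod_mono Ico_subset_Icc_self Ioo_subset_Icc_self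
  have hBIcc : B ⊆ Icc (0:ℝ) 1 := by
    rintro b ⟨p, _, rfl⟩
    exact cantorC_mem p.1 p.2
  -- cardinalities of the exceptional sets
  have hScard : #S = 𝔠 := by
    apply le_antisymm
    · calc #S ≤ #(ℝ × ℝ) := mk_le_mk_of_subset (subset_univ S) |>.trans (by rw [mk_univ])
        _ = 𝔠 := by simp [Cardinal.mk_prod, Cardinal.mk_real, continuum_mul_self]
    · have hinj : Function.Injective (fun x : Icc (0:ℝ) 1 =>
          (⟨((x : ℝ), 0), by
            refine ⟨⟨x.2, by norm_num⟩, fun hmem => ?_⟩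
            exact absurd hmem.2.1 (lt_irrefl 0)⟩ : S)) := by
        intro a b hab
        ext
        exact congrArg (fun p : S => (p : ℝ × ℝ).1) hab
      calc 𝔠 = #(Icc (0:ℝ) 1) := (mk_Icc_real one_pos).symm
        _ ≤ #S := mk_le_of_injective hinj
  have hTcard : #T = 𝔠 := by
    apply le_antisymm
    · calc #T ≤ #ℝ := mk_le_mk_of_subset (subset_univ T) |>.trans (by rw [mk_univ])
        _ = 𝔠 := Cardinal.mk_real
    · have hmem : ∀ x : Ico (0:ℝ) 1, tMap x ∈ T := by
        rintro ⟨x, hx⟩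
        refine ⟨tMap_mem x, ?_⟩
        rintro ⟨p, hp, hpe⟩
        exact tMap_not_cantorC hx hp.1 (Ioo_subset_Ico_self hp.2) hpe.symm
      have hinj : Function.Injective (fun x : Ico (0:ℝ) 1 => (⟨tMap x, hmem x⟩ : T)) := by
        intro a b hab
        ext
        exact tMap_inj a.2 b.2 (congrArg (fun t : T => (t : ℝ)) hab)
      calc 𝔠 = #(Ico (0:ℝ) 1) := (mk_Ico_real one_pos).symm
        _ ≤ #T := mk_le_of_injective hinj
  obtain ⟨e⟩ : Nonempty (S ≃ T) := Cardinal.eq.mp (hScard.trans hTcard.symm)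
  -- the bijection
  refine ⟨fun p => if hp : p ∈ A then cantorC p.1 p.2 else
    if hq : p ∈ S then (e ⟨p, hq⟩ : ℝ) else 0, ?_, ?_, ?_⟩
  · -- BijOn
    have hbij1 : Set.BijOn (fun p : ℝ × ℝ => if hp : p ∈ A then cantorC p.1 p.2 else
        if hq : p ∈ S then (e ⟨p, hq⟩ : ℝ) else 0) A B := by
      refine ⟨fun p hp => ?_, fun p hp q hq hpq => ?_, fun b hb => ?_⟩
      · simp only [dif_pos hp]; exact mem_image_of_mem _ hp
      · simp only [dif_pos hp, dif_pos hq] at hpq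
        obtain ⟨h1, h2⟩ := cantorC_inj hp.1 (Ioo_subset_Ico_self hp.2)
          hq.1 (Ioo_subset_Ico_self hq.2) hpq
        exact Prod.ext h1 h2
      · obtain ⟨p, hp, rfl⟩ := hb
        exact ⟨p, hp, by simp only [dif_pos hp]⟩
    have hbij2 : Set.BijOn (fun p : ℝ × ℝ => if hp : p ∈ A then cantorC p.1 p.2 else
        if hq : p ∈ S then (e ⟨p, hq⟩ : ℝ) else 0) S T := by
      refine ⟨fun p hp => ?_, fun p hp q hq hpq => ?_, fun t ht => ?_⟩
      · simp only [dif_neg hp.2, dif_pos hp]; exact (e ⟨p, hp⟩).2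
      · simp only [dif_neg hp.2, dif_pos hp, dif_neg hq.2, dif_pos hq] at hpq
        have := e.injective (Subtype.coe_injective hpq)
        exact congrArg Subtype.val this
      · refine ⟨(e.symm ⟨t, ht⟩ : S), (e.symm ⟨t, ht⟩).2, ?_⟩
        simp only [dif_neg (e.symm ⟨t, ht⟩).2.2, dif_pos (e.symm ⟨t, ht⟩).2]
        simp
    have hinj : Set.InjOn (fun p : ℝ × ℝ => if hp : p ∈ A then cantorC p.1 p.2 else
        if hq : p ∈ S then (e ⟨p, hq⟩ : ℝ) else 0) (A ∪ S) := by
      rintro p (hp | hp) q (hq | hq) hpq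
      · exact hbij1.injOn hp hq hpq
      · exfalso
        have h1 := hbij1.mapsTo hp
        have h2 := hbij2.mapsTo hq
        simp only at hpq
        rw [hpq] at h1
        exact h2.2 h1
      · exfalso
        have h1 := hbij1.mapsTo hq
        have h2 := hbij2.mapsTo hp
        simp only at hpq
        rw [hpq] at h2
        exact h2.2 h1
      · exact hbij2.injOn hp hq hpq
    have := hbij1.union hbij2 hinj
    rwa [union_diff_cancel hAsq, union_diff_cancel hBIcc] at this
  · -- agreement on A
    intro x hx y hy
    have : (x, y) ∈ A := ⟨hx, hy⟩
    simp only [dif_pos this]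
  · -- measure zero
    have hsub : {p : ℝ × ℝ | p ∈ Icc (0:ℝ) 1 ×ˢ Icc (0:ℝ) 1 ∧
        (if hp : p ∈ A then cantorC p.1 p.2 else
          if hq : p ∈ S then (e ⟨p, hq⟩ : ℝ) else 0) ≠ cantorC p.1 p.2}
        ⊆ ({1} ×ˢ (univ : Set ℝ)) ∪ ((univ : Set ℝ) ×ˢ ({0, 1} : Set ℝ)) := by
      rintro ⟨px, py⟩ ⟨hmem, hne⟩
      by_cases hp : (px, py) ∈ A
      · exact absurd (dif_pos hp) hne
      · have hx := hmem.1
        have hy := hmem.2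
        by_cases h1 : px = 1
        · exact Or.inl ⟨by simp [h1], mem_univ _⟩
        · have hpx : px ∈ Ico (0:ℝ) 1 := ⟨hx.1, lt_of_le_of_ne hx.2 h1⟩
          have hpy : py ∉ Ioo (0:ℝ) 1 := fun hmem2 => hp ⟨hpx, hmem2⟩
          refine Or.inr ⟨mem_univ _, ?_⟩
          rcases eq_or_lt_of_le hy.1 with h0 | h0
          · exact Or.inl h0.symm
          · have h2 : ¬ py < 1 := fun hlt => hpy ⟨h0, hlt⟩
            exact Or.inr (le_antisymm hy.2 (not_lt.mp h2))
    refine measure_mono_null hsub ?_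
    refine measure_union_null ?_ ?_
    · rw [show (volume : Measure (ℝ × ℝ)) = Measure.prod volume volume from rfl,
        Measure.prod_prod]
      simp
    · rw [show (volume : Measure (ℝ × ℝ)) = Measure.prod volume volume from rfl,
        Measure.prod_prod]
      simp [Set.Countable.measure_zero]
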